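/- arXiv:1511.07419 — 5 statements merged into one kernel-verified Lean document; each statement's English description precedes it below -/
import Mathlib

section
/- Let (ε_n) be i.i.d. strictly positive random variables and set m = inf{z ≥ 0 : P(ε_1 ≤ z) > 0}. If m ≤ 1, then for every A > 0, P(∑_{n=1}^∞ (ε_1⋯ε_n)^{−1} > A) > 0; consequently ρ(x) = P(Z < x/c − 1) < 1 for every x and c > 0. -/
open MeasureTheory ProbabilityTheory
open scoped ENNReal

/-- The random series `Z = ∑_{n≥1} (ε_1 ε_2 ⋯ ε_n)⁻¹` (with `ε j` playing the
role of `ε_{j+1}`), valued in `ℝ≥0∞` so that divergence is recorded as `∞`. -/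
noncomputable def Z {Ω : Type*} (ε : ℕ → Ω → ℝ) (ω : Ω) : ℝ≥0∞ :=
  ∑' n : ℕ, ENNReal.ofReal ((∏ j ∈ Finset.range (n + 1), ε j ω)⁻¹)

/-- If the essential infimum `m = inf {z ≥ 0 : P(ε₁ ≤ z) > 0}` satisfies
`m ≤ 1`, then `P(Z > A) > 0` for every `A > 0`; consequently
`ρ(x) = P(Z < x/c - 1) < 1` for every `x` and every `c > 0`. -/
theorem rho_lt_one_of_essInf_le_one
    {Ω : Type*} [MeasurableSpace Ω] (μ : Measure Ω) [IsProbabilityMeasure μ]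
    (ε : ℕ → Ω → ℝ) (hmeas : ∀ n, Measurable (ε n))
    (hpos : ∀ n ω, 0 < ε n ω)
    (hindep : iIndepFun ε μ)
    (hident : ∀ n, IdentDistrib (ε n) (ε 0) μ μ)
    (m : ℝ) (hm : m = sInf {z : ℝ | 0 ≤ z ∧ 0 < μ {ω | ε 0 ω ≤ z}})
    (hm1 : m ≤ 1) :
    (∀ A : ℝ, 0 < A → 0 < μ {ω | ENNReal.ofReal A < Z ε ω}) ∧
      ∀ x c : ℝ, 0 < c →
        μ {ω | Z ε ω < ENNReal.ofReal (x / c - 1)} < 1 := by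
  -- The set S is nonempty
  set S : Set ℝ := {z : ℝ | 0 ≤ z ∧ 0 < μ {ω | ε 0 ω ≤ z}} with hS
  have hSne : S.Nonempty := by
    by_contra h
    rw [Set.not_nonempty_iff_eq_empty] at h
    have hall : ∀ k : ℕ, μ {ω | ε 0 ω ≤ (k : ℝ)} = 0 := by
      intro k
      by_contra hk
      have : (k : ℝ) ∈ S := ⟨Nat.cast_nonneg k, pos_iff_ne_zero.mpr hk⟩
      simp [h] at this
    have hcover : (Set.univ : Set Ω) ⊆ ⋃ k : ℕ, {ω | ε 0 ω ≤ (k : ℝ)} := by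
      intro ω _
      refine Set.mem_iUnion.mpr ⟨⌈ε 0 ω⌉₊, ?_⟩
      show ε 0 ω ≤ _
      exact Nat.le_ceil _
    have h0 : μ (⋃ k : ℕ, {ω | ε 0 ω ≤ (k : ℝ)}) = 0 :=
      measure_iUnion_null hall
    have h1 : μ (Set.univ : Set Ω) ≤ μ (⋃ k : ℕ, {ω | ε 0 ω ≤ (k : ℝ)}) :=
      measure_mono hcover
    rw [h0, measure_univ] at h1
    exact absurd h1 (by norm_num)
  -- Positive probability of ε ≤ 1 + δ for any δ > 0
  have hp : ∀ δ : ℝ, 0 < δ → 0 < μ {ω | ε 0 ω ≤ 1 + δ} := by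
    intro δ hδ
    have h1 : sInf S < 1 + δ := lt_of_le_of_lt (hm ▸ hm1) (by linarith)
    obtain ⟨z, hzS, hz⟩ := exists_lt_of_csInf_lt hSne h1
    exact lt_of_lt_of_le hzS.2 (measure_mono fun ω hω => le_trans hω hz.le)
  -- same for all ε n
  have hpn : ∀ n : ℕ, ∀ δ : ℝ, 0 < δ → μ {ω | ε n ω ≤ 1 + δ} = μ {ω | ε 0 ω ≤ 1 + δ} := by
    intro n δ _
    have := (hident n).measure_mem_eq (measurableSet_Iic (a := (1 + δ : ℝ)))
    simpa [Set.preimage, Set.Iic] using this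
  -- Main claim
  have main : ∀ A : ℝ, 0 < A → 0 < μ {ω | ENNReal.ofReal A < Z ε ω} := by
    intro A hA
    -- choose N and δ
    obtain ⟨N, hN⟩ := exists_nat_gt (2 * A)
    have hN0 : 0 < (N : ℝ) := lt_trans (by linarith) hN
    set δ : ℝ := Real.log 2 / N with hδdef
    have hδ : 0 < δ := div_pos (Real.log_pos one_lt_two) hN0
    have hpow : (1 + δ) ^ N ≤ 2 := by
      calc (1 + δ) ^ N ≤ (Real.exp δ) ^ N := by
            apply pow_le_pow_left₀ (by linarith)
            linarith [Real.add_one_le_exp δ]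
        _ = Real.exp (N * δ) := by rw [← Real.exp_nat_mul]
        _ = 2 := by
            rw [hδdef]
            rw [mul_div_cancel₀ _ (ne_of_gt hN0)]
            exact Real.exp_log two_pos
    -- the event
    set E : Set Ω := ⋂ j ∈ Finset.range N, {ω | ε j ω ≤ 1 + δ} with hE
    have hEmeas : μ E = (μ {ω | ε 0 ω ≤ 1 + δ}) ^ N := by
      rw [hE, hindep.meas_biInter (S := Finset.range N)
        (s := fun j => {ω | ε j ω ≤ 1 + δ})
        (fun i _ => ⟨Set.Iic (1 + δ), measurableSet_Iic, rfl⟩)]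
      rw [Finset.prod_congr rfl fun i _ => hpn i δ hδ]
      simp
    have hEpos : 0 < μ E := by
      rw [hEmeas]
      exact ENNReal.pow_pos (hp δ hδ) N
    -- on E, Z is large
    have hsub : E ⊆ {ω | ENNReal.ofReal A < Z ε ω} := by
      intro ω hω
      have hbound : ∀ n ∈ Finset.range N,
          ENNReal.ofReal (((1 + δ) ^ N)⁻¹) ≤
            ENNReal.ofReal ((∏ j ∈ Finset.range (n + 1), ε j ω)⁻¹) := by
        intro n hn
        apply ENNReal.ofReal_le_ofReal
        apply inv_anti₀
        · exact Finset.prod_pos fun j _ => hpos j ω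
        · calc ∏ j ∈ Finset.range (n + 1), ε j ω
              ≤ ∏ j ∈ Finset.range (n + 1), (1 + δ) := by
                apply Finset.prod_le_prod
                · exact fun j _ => (hpos j ω).le
                · intro j hj
                  have hjN : j ∈ Finset.range N := by
                    simp only [Finset.mem_range] at *
                    omega
                  exact Set.mem_iInter₂.mp hω j hjN
            _ = (1 + δ) ^ (n + 1) := by simp
            _ ≤ (1 + δ) ^ N := by
                apply pow_le_pow_right₀ (by linarith)
                simp only [Finset.mem_range] at hn
                omega
      have hZ : ENNReal.ofReal ((N : ℝ) * ((1 + δ) ^ N)⁻¹) ≤ Z ε ω := by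
        calc ENNReal.ofReal ((N : ℝ) * ((1 + δ) ^ N)⁻¹)
            = (N : ℕ) • ENNReal.ofReal (((1 + δ) ^ N)⁻¹) := by
              rw [nsmul_eq_mul]
              rw [← ENNReal.ofReal_natCast N, ← ENNReal.ofReal_mul (by positivity)]
          _ = ∑ n ∈ Finset.range N, ENNReal.ofReal (((1 + δ) ^ N)⁻¹) := by
              simp
          _ ≤ ∑ n ∈ Finset.range N,
                ENNReal.ofReal ((∏ j ∈ Finset.range (n + 1), ε j ω)⁻¹) :=
              Finset.sum_le_sum hbound
          _ ≤ Z ε ω := ENNReal.sum_le_tsum _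
      have hAlt : A < (N : ℝ) * ((1 + δ) ^ N)⁻¹ := by
        have hinv : (2 : ℝ)⁻¹ ≤ ((1 + δ) ^ N)⁻¹ := inv_anti₀ (by positivity) hpow
        have h2 : (N : ℝ) * (2 : ℝ)⁻¹ ≤ (N : ℝ) * ((1 + δ) ^ N)⁻¹ :=
          mul_le_mul_of_nonneg_left hinv hN0.le
        nlinarith
      calc ENNReal.ofReal A < ENNReal.ofReal ((N : ℝ) * ((1 + δ) ^ N)⁻¹) := by
            exact (ENNReal.ofReal_lt_ofReal_iff (by positivity)).mpr hAlt
        _ ≤ Z ε ω := hZ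
      -- done
    exact lt_of_lt_of_le hEpos (measure_mono hsub)
  refine ⟨main, ?_⟩
  intro x c _
  -- Z is measurable
  have hZmeas : Measurable (Z ε) := by
    apply Measurable.ennreal_tsum
    intro n
    exact (Measurable.inv (Finset.measurable_prod _ fun j _ => hmeas j)).ennreal_ofReal
  set t := x / c - 1 with ht
  rcases le_or_gt t 0 with h | h
  · have : {ω | Z ε ω < ENNReal.ofReal t} = ∅ := by
      ext ω
      simp [ENNReal.ofReal_eq_zero.mpr h]
    rw [this]
    simp
  · have h1 := main t h
    have hms : MeasurableSet {ω | ENNReal.ofReal t < Z ε ω} :=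
      measurableSet_lt measurable_const hZmeas
    have hsub : {ω | Z ε ω < ENNReal.ofReal t} ⊆ {ω | ENNReal.ofReal t < Z ε ω}ᶜ := by
      intro ω hω
      simp only [Set.mem_compl_iff, Set.mem_setOf_eq, not_lt] at *
      exact hω.le
    calc μ {ω | Z ε ω < ENNReal.ofReal t} ≤ μ {ω | ENNReal.ofReal t < Z ε ω}ᶜ :=
          measure_mono hsub
      _ = 1 - μ {ω | ENNReal.ofReal t < Z ε ω} := by
          rw [measure_compl hms (measure_ne_top μ _), measure_univ]
      _ < 1 := ENNReal.sub_lt_self ENNReal.one_ne_top one_ne_zero h1.ne'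
end

section
/- Let (ε_n) be i.i.d. strictly positive random variables with essential infimum m > 1. If x < c·m/(m−1), then P(Z > x/c − 1) > 0, i.e., the survival probability ρ(x) = P(Z < x/c − 1) is strictly less than 1. -/
open MeasureTheory ProbabilityTheory Filter
open scoped ENNReal

/-- If the essential infimum `m` of `ε₁` exceeds `1` and `x < c·m/(m-1)`, then
`P(Z > x/c - 1) > 0`, i.e. the survival probability `ρ(x) = P(Z < x/c - 1)` is
strictly less than `1`. -/
theorem rho_lt_one_of_small_x
    {Ω : Type*} [MeasurableSpace Ω] (μ : Measure Ω) [IsProbabilityMeasure μ]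
    (ε : ℕ → Ω → ℝ) (hmeas : ∀ n, Measurable (ε n))
    (hpos : ∀ n ω, 0 < ε n ω)
    (hindep : iIndepFun ε μ)
    (hident : ∀ n, IdentDistrib (ε n) (ε 0) μ μ)
    (m : ℝ) (hm : m = sInf {z : ℝ | 0 ≤ z ∧ 0 < μ {ω | ε 0 ω ≤ z}})
    (hm1 : 1 < m)
    (x c : ℝ) (hc : 0 < c) (hx : x < c * m / (m - 1)) :
    0 < μ {ω | ENNReal.ofReal (x / c - 1) < Z ε ω} ∧
      μ {ω | Z ε ω < ENNReal.ofReal (x / c - 1)} < 1 := by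
  have hm0 : (0:ℝ) < m := lt_trans one_pos hm1
  set t : ℝ := x / c - 1 with ht
  set S : Set ℝ := {z : ℝ | 0 ≤ z ∧ 0 < μ {ω | ε 0 ω ≤ z}} with hSdef
  -- measurability of Z
  have hZmeas : Measurable (Z ε) := by
    apply Measurable.ennreal_tsum
    intro n
    exact ENNReal.measurable_ofReal.comp
      ((Finset.measurable_prod _ (fun j _ => hmeas j)).inv)
  -- S is nonempty
  have hSne : S.Nonempty := by
    by_contra hS
    rw [Set.not_nonempty_iff_eq_empty] at hS
    have : ¬ (μ (⋃ n : ℕ, {ω | ε 0 ω ≤ (n:ℝ)}) = 0) := by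
      have : (⋃ n : ℕ, {ω | ε 0 ω ≤ (n:ℝ)}) = Set.univ := by
        ext ω
        simp only [Set.mem_iUnion, Set.mem_setOf_eq, Set.mem_univ, iff_true]
        obtain ⟨n, hn⟩ := exists_nat_ge (ε 0 ω)
        exact ⟨n, hn⟩
      rw [this, measure_univ]; exact one_ne_zero
    apply this
    apply measure_iUnion_null
    intro n
    by_contra hμ
    have : (n:ℝ) ∈ S := ⟨Nat.cast_nonneg n, pos_iff_ne_zero.mpr hμ⟩
    rw [hS] at this; exact this
  have hSbdd : BddBelow S := ⟨0, fun z hz => hz.1⟩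
  -- for any b > m, P(ε₀ ≤ b) > 0
  have hposb : ∀ b : ℝ, m < b → 0 < μ (ε 0 ⁻¹' Set.Iic b) := by
    intro b hb
    have : sInf S < b := hm ▸ hb
    obtain ⟨z, hzS, hzb⟩ := (csInf_lt_iff hSbdd hSne).mp this
    refine lt_of_lt_of_le hzS.2 (measure_mono ?_)
    intro ω hω
    exact le_trans hω hzb.le
  -- t < 1/(m-1) = ∑' n, (m⁻¹)^(n+1)
  have hmne : m - 1 > 0 := by linarith
  have htlt : t < (m - 1)⁻¹ := by
    rw [ht]
    have h1 : x / c < m / (m - 1) := by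
      rw [div_lt_div_iff₀ hc hmne]
      rw [lt_div_iff₀ hmne] at hx
      linarith
    have h2 : m / (m - 1) - 1 = (m - 1)⁻¹ := by field_simp; ring
    linarith
  have hr0 : (0:ℝ) ≤ m⁻¹ := inv_nonneg.mpr hm0.le
  have hr1 : m⁻¹ < 1 := inv_lt_one_of_one_lt₀ hm1
  have hgeo : HasSum (fun n : ℕ => (m ^ (n+1))⁻¹) (m - 1)⁻¹ := by
    have h := (hasSum_geometric_of_lt_one hr0 hr1).mul_left m⁻¹
    have heq : ∀ n : ℕ, m⁻¹ * m⁻¹ ^ n = (m ^ (n+1))⁻¹ := by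
      intro n; rw [← inv_pow, ← pow_succ']
    have hval : m⁻¹ * (1 - m⁻¹)⁻¹ = (m - 1)⁻¹ := by
      rw [← mul_inv]
      congr 1
      field_simp
    rw [hval] at h
    exact h.congr_fun fun n => (heq n).symm
  -- choose N ≥ 1 with t < partial sum at m
  have hev : ∀ᶠ N in atTop, t < ∑ n ∈ Finset.range N, (m ^ (n+1))⁻¹ :=
    hgeo.tendsto_sum_nat.eventually_const_lt htlt
  obtain ⟨N, htN, hN1⟩ := (hev.and (eventually_ge_atTop 1)).exists
  -- choose b > m with t < partial sum at b
  have hcont : ContinuousAt (fun b : ℝ => ∑ n ∈ Finset.range N, (b ^ (n+1))⁻¹) m := by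
    exact tendsto_finset_sum (Finset.range N) fun n _ =>
      ((continuousAt_pow m (n+1)).inv₀ (pow_ne_zero _ hm0.ne') :
        ContinuousAt (fun b : ℝ => (b ^ (n+1))⁻¹) m)
  have hev2 : ∀ᶠ b in nhdsWithin m (Set.Ioi m),
      t < ∑ n ∈ Finset.range N, (b ^ (n+1))⁻¹ :=
    (hcont.eventually_const_lt htN).filter_mono nhdsWithin_le_nhds
  obtain ⟨b, htb, hbm⟩ := (hev2.and (self_mem_nhdsWithin : Set.Ioi m ∈ _)).exists
  have hb0 : (0:ℝ) < b := lt_trans hm0 hbm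
  -- the event
  set A : Set Ω := ⋂ j ∈ Finset.range N, ε j ⁻¹' Set.Iic b with hA
  have hμA : 0 < μ A := by
    have hprod := (iIndepFun_iff_measure_inter_preimage_eq_mul.mp hindep)
      (Finset.range N) (sets := fun _ => Set.Iic b) (fun i _ => measurableSet_Iic)
    rw [hA, hprod]
    rw [pos_iff_ne_zero]
    rw [Finset.prod_ne_zero_iff]
    intro j _
    rw [(hident j).measure_mem_eq measurableSet_Iic]
    exact (hposb b hbm).ne'
  -- A ⊆ {Z > t}
  have hsub : A ⊆ {ω | ENNReal.ofReal t < Z ε ω} := by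
    intro ω hω
    simp only [hA, Set.mem_iInter, Set.mem_preimage, Set.mem_Iic] at hω
    have hbound : ∀ n ∈ Finset.range N,
        (b ^ (n+1))⁻¹ ≤ (∏ j ∈ Finset.range (n+1), ε j ω)⁻¹ := by
      intro n hn
      have hprodpos : 0 < ∏ j ∈ Finset.range (n+1), ε j ω :=
        Finset.prod_pos (fun j _ => hpos j ω)
      apply inv_anti₀ hprodpos
      calc ∏ j ∈ Finset.range (n+1), ε j ω
          ≤ ∏ _j ∈ Finset.range (n+1), b := by
            apply Finset.prod_le_prod (fun j _ => (hpos j ω).le)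
            intro j hj
            apply hω
            rw [Finset.mem_range] at *
            omega
        _ = b ^ (n+1) := by rw [Finset.prod_const, Finset.card_range]
    have hfb : 0 < ∑ n ∈ Finset.range N, (b ^ (n+1))⁻¹ := by
      apply Finset.sum_pos (fun n _ => inv_pos.mpr (pow_pos hb0 _))
      exact ⟨0, Finset.mem_range.mpr hN1⟩
    calc ENNReal.ofReal t
        < ENNReal.ofReal (∑ n ∈ Finset.range N, (b ^ (n+1))⁻¹) :=
          (ENNReal.ofReal_lt_ofReal_iff hfb).mpr htb
      _ = ∑ n ∈ Finset.range N, ENNReal.ofReal ((b ^ (n+1))⁻¹) :=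
          ENNReal.ofReal_sum_of_nonneg (fun n _ => inv_nonneg.mpr (pow_nonneg hb0.le _))
      _ ≤ ∑ n ∈ Finset.range N,
            ENNReal.ofReal ((∏ j ∈ Finset.range (n+1), ε j ω)⁻¹) := by
          apply Finset.sum_le_sum
          intro n hn
          exact ENNReal.ofReal_le_ofReal (hbound n hn)
      _ ≤ Z ε ω := ENNReal.sum_le_tsum _
  have h1 : 0 < μ {ω | ENNReal.ofReal t < Z ε ω} :=
    lt_of_lt_of_le hμA (measure_mono hsub)
  refine ⟨h1, ?_⟩
  -- second part
  set u : Set Ω := {ω | ENNReal.ofReal t < Z ε ω} with hu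
  set s : Set Ω := {ω | Z ε ω < ENNReal.ofReal t} with hs
  have humeas : MeasurableSet u := hZmeas measurableSet_Ioi
  have hdisj : Disjoint s u := by
    rw [Set.disjoint_left]
    intro ω hωs hωu
    simp only [hs, hu, Set.mem_setOf_eq] at hωs hωu
    exact lt_asymm hωs hωu
  have hle : μ s + μ u ≤ 1 := by
    rw [← measure_union hdisj humeas]
    calc μ (s ∪ u) ≤ μ Set.univ := measure_mono (Set.subset_univ _)
      _ = 1 := measure_univ
  have hsne : μ s ≠ ⊤ := (lt_of_le_of_lt (measure_mono (Set.subset_univ _))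
    (by rw [measure_univ]; exact ENNReal.one_lt_top)).ne
  calc μ s < μ s + μ u := ENNReal.lt_add_right hsne h1.ne'
    _ ≤ 1 := hle
end

section
/- Let (ε_n) be i.i.d. strictly positive random variables with E log ε_1 > 0 and essential supremum M > 1. Then the essential infimum d_1 of Z = ∑_{n≥1}(ε_1⋯ε_n)^{−1} equals 1/(M−1): that is, Z ≥ 1/(M−1) a.s., and for every θ > 0, P(Z ≤ 1/(M−θ−1)) > 0 whenever M − θ > 1. -/
open MeasureTheory ProbabilityTheory
open scoped ENNReal

open Filter Set

section Aux

variable {Ω : Type*} [MeasurableSpace Ω] {μ : Measure Ω} [IsProbabilityMeasure μ]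
  {ε : ℕ → Ω → ℝ}

/-- Geometric series value. -/
lemma geom_tsum_aux {c : ℝ} (hc : 1 < c) : ∑' n : ℕ, c⁻¹ ^ (n + 1) = 1 / (c - 1) := by
  have hc0 : (0:ℝ) < c := lt_trans one_pos hc
  have h0 : (0:ℝ) ≤ c⁻¹ := by positivity
  have h1 : c⁻¹ < 1 := by
    rw [inv_lt_one_iff₀]; right; exact hc
  have hg := tsum_geometric_of_lt_one h0 h1
  have : ∑' n : ℕ, c⁻¹ ^ (n + 1) = c⁻¹ * ∑' n : ℕ, c⁻¹ ^ n := by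
    rw [← tsum_mul_left]
    exact tsum_congr fun n => by ring
  rw [this, hg]
  have h2 : c ≠ 0 := by positivity
  have h3 : c - 1 ≠ 0 := by intro h; rw [sub_eq_zero] at h; simp [h.symm] at hc
  field_simp

/-- Finite-dimensional distributions: intersections of shifted preimages. -/
lemma fd_inter_aux (hmeas : ∀ n, Measurable (ε n))
    (hindep : iIndepFun ε μ)
    (hident : ∀ n, IdentDistrib (ε n) (ε 0) μ μ)
    (N : ℕ) (S : Finset ℕ) (t : ℕ → Set ℝ) (ht : ∀ i ∈ S, MeasurableSet (t i)) :
    μ (⋂ i ∈ S, ε (N + i) ⁻¹' t i) = ∏ i ∈ S, μ (ε 0 ⁻¹' t i) := by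
  classical
  have hinj : Function.Injective (fun i : ℕ => N + i) := add_right_injective N
  set sets : ℕ → Set ℝ := fun j => t (j - N) with hsets
  have h1 : μ (⋂ j ∈ S.image (fun i => N + i), ε j ⁻¹' sets j)
      = ∏ j ∈ S.image (fun i => N + i), μ (ε j ⁻¹' sets j) := by
    refine hindep.measure_inter_preimage_eq_mul (S.image (fun i => N + i)) (fun j hj => ?_)
    simp only [Finset.mem_image] at hj
    obtain ⟨i, hi, rfl⟩ := hj
    simpa [hsets] using ht i hi
  have h2 : (⋂ j ∈ S.image (fun i => N + i), ε j ⁻¹' sets j)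
      = ⋂ i ∈ S, ε (N + i) ⁻¹' t i := by
    ext ω
    simp only [Set.mem_iInter, Finset.mem_image]
    constructor
    · intro h i hi
      have := h (N + i) ⟨i, hi, rfl⟩
      simpa [hsets] using this
    · rintro h j ⟨i, hi, rfl⟩
      simpa [hsets] using h i hi
  have h3 : ∏ j ∈ S.image (fun i => N + i), μ (ε j ⁻¹' sets j)
      = ∏ i ∈ S, μ (ε (N + i) ⁻¹' t i) := by
    rw [Finset.prod_image (fun a _ b _ h => hinj h)]
    refine Finset.prod_congr rfl fun i _ => by simp [hsets]
  rw [h2, h3] at h1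
  rw [h1]
  exact Finset.prod_congr rfl fun i hi => (hident (N + i)).measure_mem_eq (ht i hi)

/-- Finite-dimensional law shift invariance. -/
lemma fd_map_aux (hmeas : ∀ n, Measurable (ε n))
    (hindep : iIndepFun ε μ)
    (hident : ∀ n, IdentDistrib (ε n) (ε 0) μ μ)
    (N : ℕ) (S : Finset ℕ) :
    μ.map (fun ω (i : S) => ε (N + i) ω) = μ.map (fun ω (i : S) => ε (i : ℕ) ω) := by
  classical
  have hm : ∀ K : ℕ, Measurable (fun ω (i : S) => ε (K + i) ω) :=
    fun K => measurable_pi_lambda _ fun i => hmeas _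
  have hm2 : Measurable (fun ω (i : S) => ε (i : ℕ) ω) :=
    measurable_pi_lambda _ fun i => hmeas _
  haveI h1 : IsProbabilityMeasure (μ.map (fun ω (i : S) => ε (N + i) ω)) :=
    Measure.isProbabilityMeasure_map (hm N).aemeasurable
  haveI h2 : IsProbabilityMeasure (μ.map (fun ω (i : S) => ε (i : ℕ) ω)) :=
    Measure.isProbabilityMeasure_map hm2.aemeasurable
  refine ext_of_generate_finite _ generateFrom_pi.symm isPiSystem_pi (fun s hs => ?_)
    (by simp)
  obtain ⟨t, htm, rfl⟩ := hs
  simp only [Set.mem_pi, Set.mem_univ, true_imp_iff, Set.mem_setOf_eq] at htm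
  have htmeas : MeasurableSet (Set.pi Set.univ t) := MeasurableSet.univ_pi fun i => htm i
  rw [Measure.map_apply (hm N) htmeas, Measure.map_apply hm2 htmeas]
  set t' : ℕ → Set ℝ := fun j => if h : j ∈ S then t ⟨j, h⟩ else Set.univ with ht'
  have ht'meas : ∀ i ∈ S, MeasurableSet (t' i) := by
    intro i hi
    simp only [ht', dif_pos hi]
    exact htm _
  have key : ∀ K : ℕ, (fun ω (i : S) => ε (K + i) ω) ⁻¹' (Set.pi Set.univ t)
      = ⋂ i ∈ S, ε (K + i) ⁻¹' t' i := by
    intro K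
    ext ω
    simp only [Set.mem_preimage, Set.mem_pi, Set.mem_univ, true_imp_iff, Set.mem_iInter]
    constructor
    · intro h i hi
      simp only [ht', dif_pos hi]
      exact h ⟨i, hi⟩
    · intro h i
      have := h i i.2
      simpa only [ht', dif_pos i.2] using this
  have key2 : (fun ω (i : S) => ε (i : ℕ) ω) ⁻¹' (Set.pi Set.univ t)
      = ⋂ i ∈ S, ε (0 + i) ⁻¹' t' i := by
    have := key 0
    simpa using this
  rw [key N, key2, fd_inter_aux hmeas hindep hident N S t' ht'meas,
    fd_inter_aux hmeas hindep hident 0 S t' ht'meas]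

/-- Law of the shifted sequence equals law of the sequence. -/
lemma shift_map_aux (hmeas : ∀ n, Measurable (ε n))
    (hindep : iIndepFun ε μ)
    (hident : ∀ n, IdentDistrib (ε n) (ε 0) μ μ)
    (N : ℕ) :
    μ.map (fun ω (j : ℕ) => ε (N + j) ω) = μ.map (fun ω (j : ℕ) => ε j ω) := by
  have hm1 : Measurable (fun ω (j : ℕ) => ε (N + j) ω) :=
    measurable_pi_lambda _ fun j => hmeas _
  have hm2 : Measurable (fun ω (j : ℕ) => ε j ω) :=
    measurable_pi_lambda _ fun j => hmeas _
  haveI : IsProbabilityMeasure (μ.map (fun ω (j : ℕ) => ε (N + j) ω)) :=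
    Measure.isProbabilityMeasure_map hm1.aemeasurable
  haveI : IsProbabilityMeasure (μ.map (fun ω (j : ℕ) => ε j ω)) :=
    Measure.isProbabilityMeasure_map hm2.aemeasurable
  refine ext_of_generate_finite _ generateFrom_measurableCylinders.symm
    isPiSystem_measurableCylinders (fun s hs => ?_) (by simp)
  have hsm : MeasurableSet s := MeasurableSet.of_mem_measurableCylinders hs
  obtain ⟨S, B, hB, rfl⟩ := (mem_measurableCylinders s).1 hs
  rw [Measure.map_apply hm1 hsm, Measure.map_apply hm2 hsm]
  have e1 : (fun ω (j : ℕ) => ε (N + j) ω) ⁻¹' cylinder S B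
      = (fun ω (i : S) => ε (N + i) ω) ⁻¹' B := rfl
  have e2 : (fun ω (j : ℕ) => ε j ω) ⁻¹' cylinder S B
      = (fun ω (i : S) => ε (i : ℕ) ω) ⁻¹' B := rfl
  have hmS1 : Measurable (fun ω (i : S) => ε (N + i) ω) :=
    measurable_pi_lambda _ fun i => hmeas _
  have hmS2 : Measurable (fun ω (i : S) => ε (i : ℕ) ω) :=
    measurable_pi_lambda _ fun i => hmeas _
  rw [e1, e2, ← Measure.map_apply hmS1 hB, ← Measure.map_apply hmS2 hB,
    fd_map_aux hmeas hindep hident N S]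

end Aux

/-- If `E log ε₁ > 0` and the essential supremum `M` of `ε₁` is finite with
`M > 1`, then the essential infimum `d₁` of `Z` equals `1/(M-1)`: namely
`Z ≥ 1/(M-1)` a.s., and for every `θ > 0` with `M - θ > 1` one has
`P(Z ≤ 1/(M-θ-1)) > 0`. -/
theorem essInf_Z_eq
    {Ω : Type*} [MeasurableSpace Ω] (μ : Measure Ω) [IsProbabilityMeasure μ]
    (ε : ℕ → Ω → ℝ) (hmeas : ∀ n, Measurable (ε n))
    (hpos : ∀ n ω, 0 < ε n ω)
    (hindep : iIndepFun ε μ)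
    (hident : ∀ n, IdentDistrib (ε n) (ε 0) μ μ)
    (hint : Integrable (fun ω => Real.log (ε 0 ω)) μ)
    (hE : 0 < ∫ ω, Real.log (ε 0 ω) ∂μ)
    (M : ℝ) (hM : M = sSup {z : ℝ | 0 ≤ z ∧ 0 < μ {ω | z ≤ ε 0 ω}})
    (hMbdd : BddAbove {z : ℝ | 0 ≤ z ∧ 0 < μ {ω | z ≤ ε 0 ω}})
    (hM1 : 1 < M) :
    (∀ᵐ ω ∂μ, ENNReal.ofReal (1 / (M - 1)) ≤ Z ε ω) ∧
      ∀ θ : ℝ, 0 < θ → 1 < M - θ →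
        0 < μ {ω | Z ε ω ≤ ENNReal.ofReal (1 / (M - θ - 1))} := by
  classical
  have hM0 : (0:ℝ) < M := lt_trans one_pos hM1
  have hP : ∀ (n : ℕ) (ω : Ω), 0 < ∏ j ∈ Finset.range n, ε j ω :=
    fun n ω => Finset.prod_pos fun j _ => hpos j ω
  -- ## ε ≤ M almost surely
  have hnull : ∀ z : ℝ, M < z → μ {ω | z ≤ ε 0 ω} = 0 := by
    intro z hz
    by_contra h
    have hpos' : 0 < μ {ω | z ≤ ε 0 ω} := pos_iff_ne_zero.2 h
    have hzmem : z ∈ {z : ℝ | 0 ≤ z ∧ 0 < μ {ω | z ≤ ε 0 ω}} := ⟨by linarith, hpos'⟩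
    have := le_csSup hMbdd hzmem
    rw [← hM] at this
    linarith
  have hεM : ∀ᵐ ω ∂μ, ∀ n, ε n ω ≤ M := by
    rw [ae_all_iff]
    intro n
    have h0 : μ {ω | M < ε 0 ω} = 0 := by
      have hsub : {ω | M < ε 0 ω} ⊆ ⋃ k : ℕ, {ω | M + (1 : ℝ)/(k+1) ≤ ε 0 ω} := by
        intro ω hω
        simp only [Set.mem_setOf_eq] at hω
        obtain ⟨k, hk⟩ := exists_nat_one_div_lt (show 0 < ε 0 ω - M by linarith)
        exact Set.mem_iUnion.2 ⟨k, by simp only [Set.mem_setOf_eq]; linarith⟩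
      refine measure_mono_null hsub (measure_iUnion_null fun k => ?_)
      refine hnull _ ?_
      have : (0:ℝ) < 1 / ((k:ℝ) + 1) := by positivity
      linarith
    have hn : μ {ω | M < ε n ω} = 0 := by
      have := (hident n).measure_mem_eq (measurableSet_Ioi (a := M))
      simpa [Set.preimage, Set.mem_Ioi] using this.trans h0
    have : ∀ᵐ ω ∂μ, ¬ (M < ε n ω) := by
      rw [ae_iff]; simpa using hn
    filter_upwards [this] with ω hω using not_lt.1 hω
  -- ## Part 1
  have part1 : ∀ᵐ ω ∂μ, ENNReal.ofReal (1 / (M - 1)) ≤ Z ε ω := by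
    filter_upwards [hεM] with ω hω
    have hsummable : Summable (fun n : ℕ => M⁻¹ ^ (n + 1)) := by
      apply Summable.comp_injective (summable_geometric_of_lt_one (by positivity)
        (by rw [inv_lt_one_iff₀]; right; exact hM1)) (add_left_injective 1)
    have h1 : ENNReal.ofReal (1 / (M - 1)) = ∑' n : ℕ, ENNReal.ofReal (M⁻¹ ^ (n + 1)) := by
      rw [← geom_tsum_aux hM1, ENNReal.ofReal_tsum_of_nonneg (fun n => by positivity) hsummable]
    rw [h1]
    refine ENNReal.tsum_le_tsum fun n => ENNReal.ofReal_le_ofReal ?_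
    have hprodle : ∏ j ∈ Finset.range (n + 1), ε j ω ≤ M ^ (n + 1) := by
      calc ∏ j ∈ Finset.range (n + 1), ε j ω
          ≤ ∏ _j ∈ Finset.range (n + 1), M :=
            Finset.prod_le_prod (fun j _ => (hpos j ω).le) (fun j _ => hω j)
        _ = M ^ (n + 1) := by simp
    rw [inv_pow]
    exact inv_anti₀ (hP (n + 1) ω) hprodle
  refine ⟨part1, ?_⟩
  -- ## SLLN : Z < ∞ a.s.
  have hZfin : ∀ᵐ ω ∂μ, Z ε ω < ∞ := by
    have hpair : Pairwise (Function.onFun (IndepFun · · μ) fun i ω => Real.log (ε i ω)) := fun i j hij =>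
      (hindep.indepFun hij).comp Real.measurable_log Real.measurable_log
    have hid : ∀ i, IdentDistrib (fun ω => Real.log (ε i ω)) (fun ω => Real.log (ε 0 ω)) μ μ :=
      fun i => (hident i).comp Real.measurable_log
    have hslln := strong_law_ae_real (fun i ω => Real.log (ε i ω)) hint hpair hid
    filter_upwards [hslln] with ω hω
    set m := ∫ ω, Real.log (ε 0 ω) ∂μ with hm
    have h2 : ∀ᶠ n : ℕ in atTop,
        m / 2 < (∑ i ∈ Finset.range n, Real.log (ε i ω)) / n :=
      hω.eventually (eventually_gt_nhds (by linarith))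
    obtain ⟨N₀, hN₀⟩ := eventually_atTop.1 h2
    set r := Real.exp (-(m / 2)) with hr
    have hr0 : 0 < r := Real.exp_pos _
    have hr1 : r < 1 := Real.exp_lt_one_iff.2 (by linarith)
    have key : ∀ n : ℕ, N₀ ≤ n → 1 ≤ n → (∏ j ∈ Finset.range n, ε j ω)⁻¹ ≤ r ^ n := by
      intro n hn hn1
      have hS := hN₀ n hn
      have hn0 : (0:ℝ) < n := by exact_mod_cast hn1
      rw [lt_div_iff₀ hn0] at hS
      have hprod : ∏ j ∈ Finset.range n, ε j ω
          = Real.exp (∑ i ∈ Finset.range n, Real.log (ε i ω)) := by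
        rw [Real.exp_sum]
        exact Finset.prod_congr rfl fun j _ => (Real.exp_log (hpos j ω)).symm
      have hrn : r ^ n = Real.exp ((n : ℝ) * (-(m / 2))) := by
        rw [← Real.exp_nat_mul]
      rw [hprod, ← Real.exp_neg, hrn]
      apply Real.exp_le_exp.2
      nlinarith
    set N₁ := max N₀ 1 with hN₁
    have hsummable : Summable (fun n : ℕ => (∏ j ∈ Finset.range (n + 1), ε j ω)⁻¹) := by
      rw [← summable_nat_add_iff N₁]
      refine Summable.of_nonneg_of_le (fun n => (inv_nonneg.2 (hP _ ω).le))
        (fun n => ?_) (((summable_geometric_of_lt_one hr0.le hr1).mul_right (r ^ (N₁ + 1))))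
      have h1 : N₀ ≤ n + N₁ + 1 := by omega
      have h2 : 1 ≤ n + N₁ + 1 := by omega
      calc (∏ j ∈ Finset.range (n + N₁ + 1), ε j ω)⁻¹ ≤ r ^ (n + N₁ + 1) := key _ h1 h2
        _ = r ^ n * r ^ (N₁ + 1) := by rw [← pow_add]; ring_nf
    show Z ε ω < ∞
    have : Z ε ω = ENNReal.ofReal (∑' n : ℕ, (∏ j ∈ Finset.range (n + 1), ε j ω)⁻¹) := by
      rw [ENNReal.ofReal_tsum_of_nonneg (fun n => inv_nonneg.2 (hP _ ω).le) hsummable]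
      rfl
    rw [this]
    exact ENNReal.ofReal_lt_top
  -- ## Law invariance for the tail sums
  set g : (ℕ → ℝ) → ℝ≥0∞ :=
    fun v => ∑' n : ℕ, ENNReal.ofReal ((∏ j ∈ Finset.range (n + 1), v j)⁻¹) with hg
  have hgmeas : Measurable g := by
    refine Measurable.ennreal_tsum fun n => Measurable.ennreal_ofReal (Measurable.inv ?_)
    exact Finset.measurable_prod _ fun j _ => measurable_pi_apply j
  set Zt : ℕ → Ω → ℝ≥0∞ := fun N ω => g (fun j => ε (N + j) ω) with hZt
  have hZg : ∀ ω, Z ε ω = g (fun j => ε j ω) := fun ω => rfl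
  have hlaw : ∀ (N : ℕ) (C : ℝ≥0∞), μ {ω | Zt N ω ≤ C} = μ {ω | Z ε ω ≤ C} := by
    intro N C
    have hm1 : Measurable (fun ω (j : ℕ) => ε (N + j) ω) :=
      measurable_pi_lambda _ fun j => hmeas _
    have hm2 : Measurable (fun ω (j : ℕ) => ε j ω) :=
      measurable_pi_lambda _ fun j => hmeas _
    have hs : MeasurableSet {v : ℕ → ℝ | g v ≤ C} := hgmeas measurableSet_Iic
    have e1 : {ω | Zt N ω ≤ C} = (fun ω (j : ℕ) => ε (N + j) ω) ⁻¹' {v | g v ≤ C} := rfl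
    have e2 : {ω | Z ε ω ≤ C} = (fun ω (j : ℕ) => ε j ω) ⁻¹' {v | g v ≤ C} := rfl
    rw [e1, e2, ← Measure.map_apply hm1 hs, ← Measure.map_apply hm2 hs,
      shift_map_aux hmeas hindep hident N]
  -- ## Decomposition of Z
  have hdecomp : ∀ (N : ℕ) (ω : Ω),
      Z ε ω = (∑ n ∈ Finset.range N,
          ENNReal.ofReal ((∏ j ∈ Finset.range (n + 1), ε j ω)⁻¹))
        + ENNReal.ofReal ((∏ j ∈ Finset.range N, ε j ω)⁻¹) * Zt N ω := by
    intro N ω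
    have hsplit := (Summable.sum_add_tsum_nat_add' (f := fun n : ℕ =>
      ENNReal.ofReal ((∏ j ∈ Finset.range (n + 1), ε j ω)⁻¹)) (k := N) ENNReal.summable).symm
    rw [show Z ε ω = ∑' n : ℕ, ENNReal.ofReal ((∏ j ∈ Finset.range (n + 1), ε j ω)⁻¹) from rfl,
      hsplit]
    congr 1
    rw [hZt, hg, ← ENNReal.tsum_mul_left]
    refine tsum_congr fun n => ?_
    have hprod : ∏ j ∈ Finset.range (n + N + 1), ε j ω
        = (∏ j ∈ Finset.range N, ε j ω) * ∏ j ∈ Finset.range (n + 1), ε (N + j) ω := by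
      have := Finset.prod_range_add (fun j => ε j ω) N (n + 1)
      rw [show n + N + 1 = N + (n + 1) by omega]
      exact this
    rw [hprod, mul_inv, ENNReal.ofReal_mul (inv_nonneg.2 (hP N ω).le)]
  -- ## Part 2
  intro θ hθ hMθ
  set c : ℝ := M - θ / 2 with hc
  have hc1 : 1 < c := by rw [hc]; linarith
  have hc0 : (0:ℝ) < c := lt_trans one_pos hc1
  have hcM : c < M := by rw [hc]; linarith
  -- positivity of μ {ε 0 ≥ c}
  have hc_pos : 0 < μ (ε 0 ⁻¹' Set.Ici c) := by
    have hne : {z : ℝ | 0 ≤ z ∧ 0 < μ {ω | z ≤ ε 0 ω}}.Nonempty := by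
      refine ⟨0, le_refl 0, ?_⟩
      have : {ω | (0:ℝ) ≤ ε 0 ω} = Set.univ := by
        ext ω; simpa using (hpos 0 ω).le
      rw [this]
      simp
    have hlt : c < sSup {z : ℝ | 0 ≤ z ∧ 0 < μ {ω | z ≤ ε 0 ω}} := by rw [← hM]; exact hcM
    obtain ⟨z, ⟨hz0, hzpos⟩, hcz⟩ := exists_lt_of_lt_csSup hne hlt
    refine lt_of_lt_of_le hzpos (measure_mono ?_)
    intro ω hω
    simp only [Set.mem_setOf_eq] at hω
    exact le_trans hcz.le hω
  -- choose C = k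
  obtain ⟨k, hk⟩ : ∃ k : ℕ, 0 < μ {ω | Z ε ω ≤ (k : ℝ≥0∞)} := by
    by_contra h
    push_neg at h
    have h0 : ∀ k : ℕ, μ {ω | Z ε ω ≤ (k : ℝ≥0∞)} = 0 := fun k => le_antisymm (h k) zero_le
    have hinf : μ {ω | Z ε ω = ∞} = 0 := by
      refine measure_mono_null (fun ω hω => ?_) (ae_iff.1 hZfin)
      simp only [Set.mem_setOf_eq] at hω ⊢
      simp [hω]
    have hcover : (Set.univ : Set Ω) ⊆ {ω | Z ε ω = ∞} ∪ ⋃ k : ℕ, {ω | Z ε ω ≤ (k : ℝ≥0∞)} := by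
      intro ω _
      by_cases hZ : Z ε ω = ∞
      · exact Or.inl hZ
      · obtain ⟨k, hk⟩ := ENNReal.exists_nat_gt hZ
        exact Or.inr (Set.mem_iUnion.2 ⟨k, hk.le⟩)
    have : (1 : ℝ≥0∞) ≤ 0 := by
      calc (1 : ℝ≥0∞) = μ Set.univ := (measure_univ).symm
        _ ≤ μ ({ω | Z ε ω = ∞} ∪ ⋃ k : ℕ, {ω | Z ε ω ≤ (k : ℝ≥0∞)}) := measure_mono hcover
        _ ≤ μ {ω | Z ε ω = ∞} + μ (⋃ k : ℕ, {ω | Z ε ω ≤ (k : ℝ≥0∞)}) := measure_union_le _ _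
        _ ≤ 0 + 0 := by
            gcongr
            · exact le_of_eq hinf
            · exact le_of_eq (measure_iUnion_null fun k => h0 k)
        _ = 0 := by simp
    simp at this
  set R : ℝ := (k : ℝ) with hR
  have hR0 : (0:ℝ) ≤ R := Nat.cast_nonneg k
  -- δ
  set δ : ℝ := 1 / (M - θ - 1) - 1 / (c - 1) with hδ
  have hδpos : 0 < δ := by
    have h1 : 1 / (c - 1) < 1 / (M - θ - 1) := by
      apply one_div_lt_one_div_of_lt
      · linarith
      · rw [hc]; linarith
    rw [hδ]; linarith
  -- N
  obtain ⟨N, hN⟩ : ∃ N : ℕ, c⁻¹ ^ N * R ≤ δ := by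
    have hclt : c⁻¹ < 1 := by rw [inv_lt_one_iff₀]; right; exact hc1
    obtain ⟨N, hN⟩ := exists_pow_lt_of_lt_one (show 0 < δ / (R + 1) by positivity) hclt
    refine ⟨N, ?_⟩
    have h1 : c⁻¹ ^ N * R ≤ δ / (R + 1) * R :=
      mul_le_mul_of_nonneg_right hN.le hR0
    have h2 : δ / (R + 1) * R ≤ δ := by
      rw [div_mul_eq_mul_div, div_le_iff₀ (by linarith)]
      nlinarith
    linarith
  -- events
  set A : Set Ω := ⋂ j ∈ Finset.range N, ε j ⁻¹' Set.Ici c with hA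
  set B : Set Ω := {ω | Zt N ω ≤ ENNReal.ofReal R} with hB
  have hA0 : 0 < μ A := by
    rw [hA, hindep.measure_inter_preimage_eq_mul (Finset.range N)
      (sets := fun _ => Set.Ici c) (fun i _ => measurableSet_Ici)]
    refine CanonicallyOrderedAdd.prod_pos.2 fun i _ => ?_
    have := (hident i).measure_mem_eq (measurableSet_Ici (a := c))
    calc (0:ℝ≥0∞) < μ (ε 0 ⁻¹' Set.Ici c) := hc_pos
      _ = μ (ε i ⁻¹' Set.Ici c) := this.symm
  have hB0 : 0 < μ B := by
    rw [hB]
    have : ENNReal.ofReal R = (k : ℝ≥0∞) := by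
      rw [hR, ENNReal.ofReal_natCast]
    rw [this, hlaw N]
    exact hk
  -- independence of A and B
  have hIndepST : Indep (⨆ j ∈ {i : ℕ | i < N}, MeasurableSpace.comap (ε j) inferInstance)
      (⨆ j ∈ {i : ℕ | N ≤ i}, MeasurableSpace.comap (ε j) inferInstance) μ := by
    refine indep_iSup_of_disjoint (fun i => (hmeas i).comap_le)
      ((iIndepFun_iff_iIndep _ _ _).1 hindep) ?_
    rw [Set.disjoint_left]
    intro i hi hi'
    simp only [Set.mem_setOf_eq] at hi hi'
    omega
  have hAmeas : MeasurableSet[⨆ j ∈ {i : ℕ | i < N},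
      MeasurableSpace.comap (ε j) inferInstance] A := by
    rw [hA]
    refine MeasurableSet.biInter (Finset.range N).countable_toSet fun j hj => ?_
    have hjN : j ∈ {i : ℕ | i < N} := Finset.mem_range.1 hj
    have hle : MeasurableSpace.comap (ε j) inferInstance
        ≤ ⨆ j ∈ {i : ℕ | i < N}, MeasurableSpace.comap (ε j) inferInstance :=
      le_biSup (fun j => MeasurableSpace.comap (ε j) inferInstance) hjN
    exact hle _ ⟨Set.Ici c, measurableSet_Ici, rfl⟩
  have hBmeas : MeasurableSet[⨆ j ∈ {i : ℕ | N ≤ i},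
      MeasurableSpace.comap (ε j) inferInstance] B := by
    have hεT : ∀ j : ℕ, Measurable[⨆ j ∈ {i : ℕ | N ≤ i},
        MeasurableSpace.comap (ε j) inferInstance] (ε (N + j)) := by
      intro j
      have h1 : Measurable[MeasurableSpace.comap (ε (N + j)) inferInstance] (ε (N + j)) :=
        Measurable.of_comap_le le_rfl
      exact h1.mono (le_biSup (fun j => MeasurableSpace.comap (ε j) inferInstance)
        (show N + j ∈ {i : ℕ | N ≤ i} from Nat.le_add_right N j)) le_rfl
    have hφ : Measurable[⨆ j ∈ {i : ℕ | N ≤ i},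
        MeasurableSpace.comap (ε j) inferInstance] (fun ω (j : ℕ) => ε (N + j) ω) := by
      letI : MeasurableSpace Ω := ⨆ j ∈ {i : ℕ | N ≤ i},
        MeasurableSpace.comap (ε j) inferInstance
      exact measurable_pi_iff.2 hεT
    exact (hgmeas.comp hφ) measurableSet_Iic
  have hmul : μ (A ∩ B) = μ A * μ B :=
    (Indep_iff _ _ _).1 hIndepST A B hAmeas hBmeas
  have hABpos : 0 < μ (A ∩ B) := by
    rw [hmul]
    exact ENNReal.mul_pos hA0.ne' hB0.ne'
  refine lt_of_lt_of_le hABpos (measure_mono ?_)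
  rintro ω ⟨hωA, hωB⟩
  show Z ε ω ≤ ENNReal.ofReal (1 / (M - θ - 1))
  have hωA' : ∀ j, j < N → c ≤ ε j ω := by
    intro j hj
    have := Set.mem_iInter₂.1 hωA j (Finset.mem_range.2 hj)
    simpa using this
  have hωB' : Zt N ω ≤ ENNReal.ofReal R := hωB
  rw [hdecomp N ω]
  have hprodc : ∀ n : ℕ, n ≤ N → c ^ n ≤ ∏ j ∈ Finset.range n, ε j ω := by
    intro n hn
    calc c ^ n = ∏ _j ∈ Finset.range n, c := by simp
      _ ≤ ∏ j ∈ Finset.range n, ε j ω :=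
        Finset.prod_le_prod (fun j _ => hc0.le) (fun j hj => hωA' j (by
          have := Finset.mem_range.1 hj; omega))
  have h1 : ∑ n ∈ Finset.range N, ENNReal.ofReal ((∏ j ∈ Finset.range (n + 1), ε j ω)⁻¹)
      ≤ ENNReal.ofReal (1 / (c - 1)) := by
    calc ∑ n ∈ Finset.range N, ENNReal.ofReal ((∏ j ∈ Finset.range (n + 1), ε j ω)⁻¹)
        ≤ ∑ n ∈ Finset.range N, ENNReal.ofReal (c⁻¹ ^ (n + 1)) := by
          refine Finset.sum_le_sum fun n hn => ENNReal.ofReal_le_ofReal ?_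
          rw [inv_pow]
          exact inv_anti₀ (pow_pos hc0 _)
            (hprodc (n + 1) (by have := Finset.mem_range.1 hn; omega))
      _ = ENNReal.ofReal (∑ n ∈ Finset.range N, c⁻¹ ^ (n + 1)) :=
          (ENNReal.ofReal_sum_of_nonneg fun n _ => pow_nonneg (inv_nonneg.2 hc0.le) _).symm
      _ ≤ ENNReal.ofReal (1 / (c - 1)) := by
          refine ENNReal.ofReal_le_ofReal ?_
          rw [← geom_tsum_aux hc1]
          refine Summable.sum_le_tsum (Finset.range N) (fun n _ => pow_nonneg (inv_nonneg.2 hc0.le) _) ?_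
          apply Summable.comp_injective (summable_geometric_of_lt_one (inv_nonneg.2 hc0.le)
            (by rw [inv_lt_one_iff₀]; right; exact hc1)) (add_left_injective 1)
  have h2 : ENNReal.ofReal ((∏ j ∈ Finset.range N, ε j ω)⁻¹) * Zt N ω
      ≤ ENNReal.ofReal δ := by
    calc ENNReal.ofReal ((∏ j ∈ Finset.range N, ε j ω)⁻¹) * Zt N ω
        ≤ ENNReal.ofReal (c⁻¹ ^ N) * ENNReal.ofReal R := by
          refine mul_le_mul' (ENNReal.ofReal_le_ofReal ?_) hωB'
          rw [inv_pow]
          exact inv_anti₀ (pow_pos hc0 _) (hprodc N le_rfl)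
      _ = ENNReal.ofReal (c⁻¹ ^ N * R) :=
          (ENNReal.ofReal_mul (pow_nonneg (inv_nonneg.2 hc0.le) _)).symm
      _ ≤ ENNReal.ofReal δ := ENNReal.ofReal_le_ofReal hN
  calc (∑ n ∈ Finset.range N, ENNReal.ofReal ((∏ j ∈ Finset.range (n + 1), ε j ω)⁻¹))
      + ENNReal.ofReal ((∏ j ∈ Finset.range N, ε j ω)⁻¹) * Zt N ω
      ≤ ENNReal.ofReal (1 / (c - 1)) + ENNReal.ofReal δ := add_le_add h1 h2
    _ = ENNReal.ofReal (1 / (c - 1) + δ) :=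
        (ENNReal.ofReal_add (by
          have h9 : (0:ℝ) < c - 1 := by linarith
          positivity) hδpos.le).symm
    _ = ENNReal.ofReal (1 / (M - θ - 1)) := by rw [hδ]; ring_nf
end

section
/- Let (ε_n) be i.i.d. strictly positive random variables with E log ε_1 > 0 and essential infimum m > 1. Then the essential supremum d_2 of Z = ∑_{n≥1}(ε_1⋯ε_n)^{−1} equals 1/(m−1). If instead m ≤ 1, then d_2 = ∞, i.e., P(Z ≥ A) > 0 for every A > 0. -/
open MeasureTheory ProbabilityTheory
open scoped ENNReal

lemma hasSum_aux {b : ℝ} (hb : 1 < b) :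
    HasSum (fun n : ℕ => (b⁻¹) ^ (n + 1)) (1 / (b - 1)) := by
  have hb0 : (0:ℝ) < b := lt_trans one_pos hb
  have hx0 : (0:ℝ) ≤ b⁻¹ := by positivity
  have hx1 : b⁻¹ < 1 := by rw [inv_lt_one_iff₀]; right; exact hb
  have h := (hasSum_geometric_of_lt_one hx0 hx1).mul_left b⁻¹
  have heq : b⁻¹ * (1 - b⁻¹)⁻¹ = 1 / (b - 1) := by
    rw [← mul_inv]; field_simp
  rw [heq] at h
  simp only [pow_succ']
  exact h

/-- Let `d₂ = sup {z : P(Z ≥ z) > 0}` be the essential supremum of `Z` and `m`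
the essential infimum of `ε₁`.  If `m > 1` then `d₂ = 1/(m-1)`; if `m ≤ 1` then
`d₂ = ∞`, i.e. `P(Z ≥ A) > 0` for every `A > 0`. -/
theorem essSup_Z_eq
    {Ω : Type*} [MeasurableSpace Ω] (μ : Measure Ω) [IsProbabilityMeasure μ]
    (ε : ℕ → Ω → ℝ) (hmeas : ∀ n, Measurable (ε n))
    (hpos : ∀ n ω, 0 < ε n ω)
    (hindep : iIndepFun ε μ)
    (hident : ∀ n, IdentDistrib (ε n) (ε 0) μ μ)
    (hint : Integrable (fun ω => Real.log (ε 0 ω)) μ)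
    (hE : 0 < ∫ ω, Real.log (ε 0 ω) ∂μ)
    (m : ℝ) (hm : m = sInf {z : ℝ | 0 ≤ z ∧ 0 < μ {ω | ε 0 ω ≤ z}})
    (d₂ : ℝ≥0∞) (hd₂ : d₂ = sSup {z : ℝ≥0∞ | 0 < μ {ω | z ≤ Z ε ω}}) :
    (1 < m → d₂ = ENNReal.ofReal (1 / (m - 1))) ∧
      (m ≤ 1 → d₂ = ∞ ∧
        ∀ A : ℝ, 0 < A → 0 < μ {ω | ENNReal.ofReal A ≤ Z ε ω}) := by
  set mset : Set ℝ := {z : ℝ | 0 ≤ z ∧ 0 < μ {ω | ε 0 ω ≤ z}} with hmset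
  set S : Set ℝ≥0∞ := {z : ℝ≥0∞ | 0 < μ {ω | z ≤ Z ε ω}} with hS
  -- mset is nonempty
  have hne : mset.Nonempty := by
    by_contra h
    rw [Set.not_nonempty_iff_eq_empty, Set.eq_empty_iff_forall_notMem] at h
    have hcov : (⋃ k : ℕ, {ω | ε 0 ω ≤ (k : ℝ)}) = Set.univ := by
      ext ω
      simp only [Set.mem_iUnion, Set.mem_univ, iff_true, Set.mem_setOf_eq]
      obtain ⟨k, hk⟩ := (exists_nat_ge (ε 0 ω) : ∃ k : ℕ, ε 0 ω ≤ (k : ℝ))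
      exact ⟨k, hk⟩
    have hzero : μ (⋃ k : ℕ, {ω | ε 0 ω ≤ (k : ℝ)}) = 0 := by
      refine measure_iUnion_null fun k => ?_
      have := h (k : ℝ)
      simp only [hmset, Set.mem_setOf_eq, not_and, not_lt] at this
      exact le_antisymm (this (Nat.cast_nonneg k)) zero_le
    rw [hcov, measure_univ] at hzero
    exact one_ne_zero hzero
  have hbdd : BddBelow mset := ⟨0, fun x hx => hx.1⟩
  have hm0 : 0 ≤ m := hm ▸ Real.sInf_nonneg fun x hx => hx.1
  -- positive probability of being ≤ c for any c > m
  have hlt : ∀ c : ℝ, m < c → 0 < μ {ω | ε 0 ω ≤ c} := by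
    intro c hc
    rw [hm] at hc
    obtain ⟨z, hz, hzc⟩ := exists_lt_of_csInf_lt hne hc
    exact lt_of_lt_of_le hz.2 (measure_mono fun ω hω => le_trans hω hzc.le)
  -- the "bad" set where some ε is below m is null
  have h0 : μ {ω | ε 0 ω < m} = 0 := by
    have hsub : {ω | ε 0 ω < m} ⊆ ⋃ k : ℕ, {ω | ε 0 ω ≤ m - 1 / (k + 1)} := by
      intro ω hω
      simp only [Set.mem_setOf_eq] at hω
      obtain ⟨k, hk⟩ := exists_nat_one_div_lt (sub_pos.2 hω)
      exact Set.mem_iUnion.2 ⟨k, by simp only [Set.mem_setOf_eq]; linarith⟩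
    refine measure_mono_null hsub (measure_iUnion_null fun k => ?_)
    set q : ℝ := m - 1 / (k + 1) with hq
    have hqm : q < m := by
      have : (0:ℝ) < 1 / (k + 1) := by positivity
      simp only [hq]; linarith
    by_contra hposq
    have hposq' : 0 < μ {ω | ε 0 ω ≤ q} := pos_iff_ne_zero.2 hposq
    rcases le_or_gt 0 q with hq0 | hq0
    · have : q ∈ mset := ⟨hq0, hposq'⟩
      have := hm ▸ csInf_le hbdd this
      linarith
    · have : {ω | ε 0 ω ≤ q} = ∅ := by
        rw [Set.eq_empty_iff_forall_notMem]
        intro ω hω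
        have := hpos 0 ω
        simp only [Set.mem_setOf_eq] at hω
        linarith
      rw [this, measure_empty] at hposq'
      exact lt_irrefl _ hposq'
  have hnull : μ {ω | ∃ n, ε n ω < m} = 0 := by
    have : {ω | ∃ n, ε n ω < m} = ⋃ n, ε n ⁻¹' Set.Iio m := by
      ext ω; simp [Set.mem_iUnion]
    rw [this]
    refine measure_iUnion_null fun n => ?_
    have := (hident n).measure_mem_eq (measurableSet_Iio (a := m))
    rw [this]
    exact h0
  -- key lower-bound construction
  have key : ∀ c : ℝ, m < c → ∀ N : ℕ,
      0 < μ {ω | ENNReal.ofReal (∑ n ∈ Finset.range N, (c⁻¹) ^ (n + 1)) ≤ Z ε ω} := by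
    intro c hc N
    have hc0 : 0 < c := lt_of_le_of_lt hm0 hc
    have hE : μ (⋂ i ∈ Finset.range N, ε i ⁻¹' Set.Iic c)
        = ∏ i ∈ Finset.range N, μ (ε i ⁻¹' Set.Iic c) :=
      hindep.meas_biInter fun i _ => ⟨Set.Iic c, measurableSet_Iic, rfl⟩
    have hEpos : 0 < μ (⋂ i ∈ Finset.range N, ε i ⁻¹' Set.Iic c) := by
      rw [hE]
      have heq : ∀ i ∈ Finset.range N, μ (ε i ⁻¹' Set.Iic c) = μ (ε 0 ⁻¹' Set.Iic c) :=
        fun i _ => (hident i).measure_mem_eq measurableSet_Iic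
      rw [Finset.prod_congr rfl heq, Finset.prod_const]
      exact ENNReal.pow_pos (hlt c hc) _
    refine lt_of_lt_of_le hEpos (measure_mono ?_)
    intro ω hω
    simp only [Set.mem_iInter, Set.mem_preimage, Set.mem_Iic, Finset.mem_range] at hω
    show ENNReal.ofReal _ ≤ Z ε ω
    have hterm : ∀ n ∈ Finset.range N,
        (c⁻¹) ^ (n + 1) ≤ (∏ j ∈ Finset.range (n + 1), ε j ω)⁻¹ := by
      intro n hn
      rw [Finset.mem_range] at hn
      have hprod_pos : 0 < ∏ j ∈ Finset.range (n + 1), ε j ω :=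
        Finset.prod_pos fun j _ => hpos j ω
      have hle : ∏ j ∈ Finset.range (n + 1), ε j ω ≤ c ^ (n + 1) := by
        calc ∏ j ∈ Finset.range (n + 1), ε j ω
            ≤ ∏ _j ∈ Finset.range (n + 1), c :=
              Finset.prod_le_prod (fun j _ => (hpos j ω).le)
                (fun j hj => hω j (lt_of_lt_of_le (Finset.mem_range.1 hj) hn))
          _ = c ^ (n + 1) := by rw [Finset.prod_const, Finset.card_range]
      rw [inv_pow]
      exact inv_anti₀ hprod_pos hle
    calc ENNReal.ofReal (∑ n ∈ Finset.range N, (c⁻¹) ^ (n + 1))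
        = ∑ n ∈ Finset.range N, ENNReal.ofReal ((c⁻¹) ^ (n + 1)) :=
          ENNReal.ofReal_sum_of_nonneg fun n _ => by positivity
      _ ≤ ∑ n ∈ Finset.range N,
            ENNReal.ofReal ((∏ j ∈ Finset.range (n + 1), ε j ω)⁻¹) :=
          Finset.sum_le_sum fun n hn => ENNReal.ofReal_le_ofReal (hterm n hn)
      _ ≤ Z ε ω := ENNReal.sum_le_tsum _
  -- geometric partial sums exceed anything below the limit
  have hgeo : ∀ b : ℝ, 1 < b → ∀ r : ℝ, r < 1 / (b - 1) →
      ∃ N : ℕ, r < ∑ n ∈ Finset.range N, (b⁻¹) ^ (n + 1) :=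
    fun b hb r hr =>
      ((hasSum_aux hb).tendsto_sum_nat.eventually (eventually_gt_nhds hr)).exists
  constructor
  · -- case m > 1
    intro h1
    have hm1 : (0:ℝ) < m - 1 := sub_pos.2 h1
    have hm1' : (0:ℝ) < 1 / (m - 1) := by positivity
    -- upper bound
    have hub : ∀ z ∈ S, z ≤ ENNReal.ofReal (1 / (m - 1)) := by
      intro z hz
      by_contra hzL
      push_neg at hzL
      have hsub : {ω | z ≤ Z ε ω} ⊆ {ω | ∃ n, ε n ω < m} := by
        intro ω hω
        by_contra hno
        simp only [Set.mem_setOf_eq, not_exists, not_lt] at hno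
        have hZle : Z ε ω ≤ ENNReal.ofReal (1 / (m - 1)) := by
          have h1le : ∀ n : ℕ, (∏ j ∈ Finset.range (n + 1), ε j ω)⁻¹ ≤ (m⁻¹) ^ (n + 1) := by
            intro n
            have hmp : 0 < m ^ (n + 1) := by positivity
            have hle : m ^ (n + 1) ≤ ∏ j ∈ Finset.range (n + 1), ε j ω := by
              calc m ^ (n + 1) = ∏ _j ∈ Finset.range (n + 1), m := by
                    rw [Finset.prod_const, Finset.card_range]
                _ ≤ ∏ j ∈ Finset.range (n + 1), ε j ω :=
                    Finset.prod_le_prod (fun j _ => by linarith) (fun j _ => hno j)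
            rw [inv_pow]
            exact inv_anti₀ hmp hle
          calc Z ε ω ≤ ∑' n : ℕ, ENNReal.ofReal ((m⁻¹) ^ (n + 1)) :=
                ENNReal.tsum_le_tsum fun n => ENNReal.ofReal_le_ofReal (h1le n)
            _ = ENNReal.ofReal (∑' n : ℕ, (m⁻¹) ^ (n + 1)) :=
                (ENNReal.ofReal_tsum_of_nonneg (fun n => by positivity)
                  (hasSum_aux h1).summable).symm
            _ = ENNReal.ofReal (1 / (m - 1)) := by rw [(hasSum_aux h1).tsum_eq]
        exact absurd (le_trans hω hZle) (not_le.2 hzL)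
      have : μ {ω | z ≤ Z ε ω} = 0 := measure_mono_null hsub hnull
      rw [hS] at hz
      simp only [Set.mem_setOf_eq] at hz
      rw [this] at hz
      exact lt_irrefl _ hz
    -- lower bound : everything below 1/(m-1) is in S
    have hIio : ∀ z : ℝ≥0∞, z < ENNReal.ofReal (1 / (m - 1)) → z ∈ S := by
      intro z hz
      have hzt : z ≠ ⊤ := ne_top_of_lt hz
      have hr : z.toReal < 1 / (m - 1) := (ENNReal.lt_ofReal_iff_toReal_lt hzt).1 hz
      have hr0 : 0 ≤ z.toReal := ENNReal.toReal_nonneg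
      set r := z.toReal with hrdef
      set t : ℝ := (r + 1 / (m - 1)) / 2 with htdef
      have hrt : r < t := by simp only [htdef]; linarith
      have ht2 : t < 1 / (m - 1) := by simp only [htdef]; linarith
      have ht0 : 0 < t := by simp only [htdef]; linarith
      set b : ℝ := 1 + 1 / t with hbdef
      have h1t : 0 < 1 / t := by positivity
      have hb : 1 < b := by simp only [hbdef]; linarith
      have hbm : m < b := by
        have hmt : (m - 1) * t < 1 := by
          calc (m - 1) * t < (m - 1) * (1 / (m - 1)) := mul_lt_mul_of_pos_left ht2 hm1
            _ = 1 := by field_simp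
        have : m - 1 < 1 / t := by rw [lt_div_iff₀ ht0]; exact hmt
        simp only [hbdef]; linarith
      have hb1 : 1 / (b - 1) = t := by
        simp only [hbdef, add_sub_cancel_left, one_div_one_div]
      obtain ⟨N, hN⟩ := hgeo b hb r (by rw [hb1]; exact hrt)
      have hkey := key b hbm N
      rw [hS]
      simp only [Set.mem_setOf_eq]
      refine lt_of_lt_of_le hkey (measure_mono ?_)
      intro ω hω
      simp only [Set.mem_setOf_eq] at hω ⊢
      refine le_trans ?_ hω
      rw [← ENNReal.ofReal_toReal hzt]
      exact ENNReal.ofReal_le_ofReal hN.le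
    rw [hd₂]
    refine le_antisymm (sSup_le hub) ?_
    by_contra hlt'
    push_neg at hlt'
    obtain ⟨w, hw1, hw2⟩ := exists_between hlt'
    exact absurd (le_sSup (hIio w hw2)) (not_le.2 hw1)
  · -- case m ≤ 1
    intro hm1
    have hA : ∀ A : ℝ, 0 < A → 0 < μ {ω | ENNReal.ofReal A ≤ Z ε ω} := by
      intro A hA0
      set η : ℝ := 1 / (A + 1) with hηdef
      have hη : 0 < η := by positivity
      set b : ℝ := 1 + η with hbdef
      have hb : 1 < b := by simp only [hbdef]; linarith
      have hb1 : 1 / (b - 1) = A + 1 := by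
        simp only [hbdef, add_sub_cancel_left, hηdef, one_div_one_div]
      obtain ⟨N, hN⟩ := hgeo b hb A (by rw [hb1]; linarith)
      set c : ℝ := m + η with hcdef
      have hc : m < c := by simp only [hcdef]; linarith
      have hcb : c ≤ b := by simp only [hcdef, hbdef]; linarith
      have hc0 : 0 < c := lt_of_le_of_lt hm0 hc
      have hSc : ∑ n ∈ Finset.range N, (b⁻¹) ^ (n + 1)
          ≤ ∑ n ∈ Finset.range N, (c⁻¹) ^ (n + 1) :=
        Finset.sum_le_sum fun n _ =>
          pow_le_pow_left₀ (by positivity) (inv_anti₀ hc0 hcb) _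
      refine lt_of_lt_of_le (key c hc N) (measure_mono ?_)
      intro ω hω
      simp only [Set.mem_setOf_eq] at hω ⊢
      exact le_trans (ENNReal.ofReal_le_ofReal (le_trans hN.le hSc)) hω
    refine ⟨?_, hA⟩
    rw [hd₂]
    by_contra htop
    have hfin : sSup S ≠ ⊤ := htop
    have hmem : ENNReal.ofReal ((sSup S).toReal + 1) ∈ S :=
      hA ((sSup S).toReal + 1) (by positivity)
    have hle := le_sSup hmem
    rw [ENNReal.ofReal_add ENNReal.toReal_nonneg zero_le_one,
      ENNReal.ofReal_toReal hfin, ENNReal.ofReal_one] at hle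
    exact absurd hle (ENNReal.lt_add_right hfin one_ne_zero).not_ge
end

section
/- Let (ε_n) be i.i.d. strictly positive random variables, and for n ≥ 1 define Z_n = ∑_{j=1}^{n}(ε_1⋯ε_j)^{−1}, with moments β_r^{(n)} = E[Z_n^r] and γ_r = E[ε_1^{−r}] (assumed finite). Then the moments satisfy the recursion β_r^{(n)} = γ_r · ∑_{j=0}^{r} C(r,j) β_j^{(n−1)}, with β_0^{(n)} = 1 for all n ≥ 1 and β_r^{(0)} = 0 for all r ≥ 1. -/
open MeasureTheory ProbabilityTheory
open scoped ENNReal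

/-- The finite-horizon series `Z_n = ∑_{j=1}^{n} (ε_1⋯ε_j)⁻¹` (with `ε i`
playing the role of `ε_{i+1}`), valued in `ℝ≥0∞`; `Z_0 = 0`. -/
noncomputable def Zfin {Ω : Type*} (ε : ℕ → Ω → ℝ) (n : ℕ) (ω : Ω) : ℝ≥0∞ :=
  ∑ j ∈ Finset.range n, ENNReal.ofReal ((∏ i ∈ Finset.range (j + 1), ε i ω)⁻¹)

/-- Abstract moment recursion values. -/
noncomputable def Fmom (γ : ℕ → ℝ≥0∞) : ℕ → ℕ → ℝ≥0∞
  | 0, j => if j = 0 then 1 else 0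
  | m+1, j => γ j * ∑ i ∈ Finset.range (j+1), (j.choose i : ℝ≥0∞) * Fmom γ m i

lemma measurable_Zfin {Ω : Type*} [MeasurableSpace Ω] (ε : ℕ → Ω → ℝ)
    (hmeas : ∀ n, Measurable (ε n)) (m : ℕ) : Measurable (Zfin ε m) := by
  apply Finset.measurable_sum
  intro j _
  exact ENNReal.measurable_ofReal.comp ((Finset.measurable_prod _ fun i _ => hmeas i).inv)

lemma Zfin_succ {Ω : Type*} (η : ℕ → Ω → ℝ) (hpos : ∀ n ω, 0 < η n ω) (m : ℕ) (ω : Ω) :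
    Zfin η (m+1) ω
      = ENNReal.ofReal ((η 0 ω)⁻¹) * (1 + Zfin (fun i => η (i+1)) m ω) := by
  unfold Zfin
  rw [Finset.sum_range_succ']
  have h0 : ∏ i ∈ Finset.range 1, η i ω = η 0 ω := Finset.prod_range_one (fun i => η i ω)
  rw [h0, mul_add, mul_one, Finset.mul_sum, add_comm]
  congr 1
  apply Finset.sum_congr rfl
  intro j _
  rw [Finset.prod_range_succ' (fun i => η i ω) (j+1), mul_inv, mul_comm ((∏ i ∈ Finset.range (j+1), η (i+1) ω))⁻¹,
    ENNReal.ofReal_mul (inv_nonneg.2 (hpos 0 ω).le)]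

lemma Zfin_key {Ω : Type*} [MeasurableSpace Ω] (μ : Measure Ω) [IsProbabilityMeasure μ]
    (ε : ℕ → Ω → ℝ) (hmeas : ∀ n, Measurable (ε n))
    (hpos : ∀ n ω, 0 < ε n ω)
    (hindep : iIndepFun ε μ)
    (hident : ∀ n, IdentDistrib (ε n) (ε 0) μ μ)
    (γ : ℕ → ℝ≥0∞) (hγ : ∀ s, γ s = ∫⁻ ω, ENNReal.ofReal ((ε 0 ω)⁻¹ ^ s) ∂μ) :
    ∀ m k r, ∫⁻ ω, (Zfin (fun i => ε (i + k)) m ω) ^ r ∂μ = Fmom γ m r := by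
  intro m
  induction m with
  | zero =>
    intro k r
    have hz : ∀ ω : Ω, Zfin (fun i => ε (i + k)) 0 ω = 0 := fun ω => by simp [Zfin]
    rcases r with _ | s
    · simp [Fmom, hz]
    · simp [Fmom, hz]
  | succ m ih =>
    intro k r
    set a : Ω → ℝ≥0∞ := fun ω => ENNReal.ofReal ((ε k ω)⁻¹) with ha
    set W : Ω → ℝ≥0∞ := fun ω => Zfin (fun i => ε (i + (k+1))) m ω with hW
    have hdec : ∀ ω, Zfin (fun i => ε (i + k)) (m+1) ω = a ω * (1 + W ω) := by
      intro ω
      rw [Zfin_succ (fun i => ε (i + k)) (fun n ω => hpos _ ω)]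
      have h1 : (fun i => ε (i + 1 + k)) = (fun i => ε (i + (k+1))) := by
        funext i; have : i + 1 + k = i + (k+1) := by omega
        rw [this]
      simp only [Nat.zero_add, h1, ha, hW]
    have hWmeas : Measurable W := measurable_Zfin _ (fun n => hmeas _) m
    have hameas : Measurable a := (ENNReal.measurable_ofReal.comp (hmeas k).inv)
    -- independence of a and W
    have hIndaW : IndepFun a W μ := by
      set T : Finset ℕ := Finset.Icc (k+1) (k+m) with hT
      have hST : Disjoint ({k} : Finset ℕ) T := by
        simp only [hT, Finset.disjoint_singleton_left, Finset.mem_Icc]; omega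
      have h1 := hindep.indepFun_finset {k} T hST hmeas
      have hkmem : k ∈ ({k} : Finset ℕ) := Finset.mem_singleton_self k
      set φ : (({k} : Finset ℕ) → ℝ) → ℝ≥0∞ :=
        fun v => ENNReal.ofReal ((v ⟨k, hkmem⟩)⁻¹) with hφ
      set ψ : (T → ℝ) → ℝ≥0∞ := fun v =>
        ∑ j ∈ Finset.range m, ENNReal.ofReal
          ((∏ i ∈ Finset.range (j+1),
            (if h : (k+1+i) ∈ T then v ⟨k+1+i, h⟩ else 1))⁻¹) with hψ
      have hφm : Measurable φ :=
        ENNReal.measurable_ofReal.comp (measurable_pi_apply _).inv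
      have hψm : Measurable ψ := by
        apply Finset.measurable_sum
        intro j _
        apply ENNReal.measurable_ofReal.comp
        apply Measurable.inv
        apply Finset.measurable_prod
        intro i _
        by_cases h : (k+1+i) ∈ T
        · simp only [dif_pos h]; exact measurable_pi_apply _
        · simp only [dif_neg h]; exact measurable_const
      have h2 := h1.comp hφm hψm
      have e1 : (φ ∘ fun ω (i : ({k} : Finset ℕ)) => ε i ω) = a := by
        funext ω; simp [hφ, ha]
      have e2 : (ψ ∘ fun ω (i : T) => ε i ω) = W := by
        funext ω
        simp only [Function.comp_apply, hψ, hW, Zfin]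
        apply Finset.sum_congr rfl
        intro j hj
        congr 1
        congr 1
        apply Finset.prod_congr rfl
        intro i hi
        have hmem : (k+1+i) ∈ T := by
          simp only [hT, Finset.mem_Icc]
          simp only [Finset.mem_range] at hi hj
          omega
        rw [dif_pos hmem]
        congr 1
        omega
      rwa [e1, e2] at h2
    have haI : ∫⁻ ω, a ω ^ r ∂μ = γ r := by
      rw [hγ r]
      have hid := (hident k).comp
        (u := fun x : ℝ => ENNReal.ofReal x⁻¹ ^ r)
        ((ENNReal.measurable_ofReal.comp measurable_inv).pow_const r)
      have := hid.lintegral_eq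
      simp only [Function.comp] at this
      rw [ha]
      rw [this]
      congr 1
      funext ω
      rw [ENNReal.ofReal_pow (inv_nonneg.2 (hpos 0 ω).le)]
    calc ∫⁻ ω, (Zfin (fun i => ε (i + k)) (m+1) ω) ^ r ∂μ
        = ∫⁻ ω, ∑ j ∈ Finset.range (r+1),
            (r.choose j : ℝ≥0∞) * (a ω ^ r * W ω ^ j) ∂μ := by
          congr 1; funext ω
          rw [hdec, mul_pow, add_comm (1 : ℝ≥0∞) (W ω), add_pow, Finset.mul_sum]
          apply Finset.sum_congr rfl
          intro j _
          ring
      _ = ∑ j ∈ Finset.range (r+1),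
            (r.choose j : ℝ≥0∞) * (γ r * Fmom γ m j) := by
          rw [lintegral_finset_sum]
          · apply Finset.sum_congr rfl
            intro j _
            rw [lintegral_const_mul (f := fun ω => a ω ^ r * W ω ^ j) _ ((hameas.pow_const r).mul (hWmeas.pow_const j))]
            congr 1
            have := lintegral_mul_eq_lintegral_mul_lintegral_of_indepFun
              (hameas.pow_const r) (hWmeas.pow_const j)
              (hIndaW.comp (measurable_id.pow_const r) (measurable_id.pow_const j))
            simp only [Pi.mul_apply] at this
            rw [this, haI, ih (k+1) j]
          · intro j _
            exact measurable_const.mul ((hameas.pow_const r).mul (hWmeas.pow_const j))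
      _ = Fmom γ (m+1) r := by
          simp only [Fmom, Finset.mul_sum]
          apply Finset.sum_congr rfl
          intro j _
          ring

/-- Finite-horizon moment recursion: with `β_r^{(n)} = E[Z_n^r]` and
`γ_r = E[ε₁^{-r}]` (assumed finite), one has
`β_r^{(n)} = γ_r · ∑_{j=0}^{r} C(r,j) β_j^{(n-1)}` for `n ≥ 1`, together with
`β_0^{(n)} = 1` for `n ≥ 1` and `β_r^{(0)} = 0` for `r ≥ 1`. -/
theorem Zfin_moment_recursion
    {Ω : Type*} [MeasurableSpace Ω] (μ : Measure Ω) [IsProbabilityMeasure μ]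
    (ε : ℕ → Ω → ℝ) (hmeas : ∀ n, Measurable (ε n))
    (hpos : ∀ n ω, 0 < ε n ω)
    (hindep : iIndepFun ε μ)
    (hident : ∀ n, IdentDistrib (ε n) (ε 0) μ μ)
    (γ : ℕ → ℝ≥0∞) (hγ : ∀ s, γ s = ∫⁻ ω, ENNReal.ofReal ((ε 0 ω)⁻¹ ^ s) ∂μ)
    (hγfin : ∀ s, γ s < ∞)
    (β : ℕ → ℕ → ℝ≥0∞) (hβ : ∀ r n, β r n = ∫⁻ ω, Zfin ε n ω ^ r ∂μ) :
    (∀ n, 1 ≤ n → β 0 n = 1) ∧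
    (∀ r, 1 ≤ r → β r 0 = 0) ∧
    (∀ r n, 1 ≤ n →
      β r n = γ r * ∑ j ∈ Finset.range (r + 1),
        (r.choose j : ℝ≥0∞) * β j (n - 1)) := by
  have hε0 : (fun i => ε (i + 0)) = ε := by funext i; rw [Nat.add_zero]
  have hk : ∀ m r, β r m = Fmom γ m r := by
    intro m r
    rw [hβ r m, ← Zfin_key μ ε hmeas hpos hindep hident γ hγ m 0 r, hε0]
  refine ⟨?_, ?_, ?_⟩
  · intro n hn
    rw [hβ]
    simp
  · intro r hr
    rw [hβ]
    have hz : ∀ ω : Ω, Zfin ε 0 ω = 0 := fun ω => by simp [Zfin]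
    rcases r with _ | s
    · omega
    · simp [hz]
  · intro r n hn
    obtain ⟨m, rfl⟩ : ∃ m, n = m + 1 := ⟨n - 1, by omega⟩
    rw [hk (m+1) r]
    simp only [Nat.add_sub_cancel]
    have : Fmom γ (m+1) r
        = γ r * ∑ j ∈ Finset.range (r+1), (r.choose j : ℝ≥0∞) * Fmom γ m j := rfl
    rw [this]
    congr 1
    apply Finset.sum_congr rfl
    intro j _
    rw [hk m j]
end
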